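/- For m ≥ 1 and h ≥ 0, g_{a,b,k}(m+1, kh+b) = ν q^{kh+b} ( g_{a,b,k}(m, kh+a) + g_{a,b,k}(m, kh+b) ), i.e., removing the largest part kh+b from a partition in B_{a,b,k}(m+1) with largest part kh+b yields a bijection onto partitions in B_{a,b,k}(m) with largest part kh+a or kh+b. -/

import Mathlib

noncomputable section

/-- The q-Pochhammer symbol (q^t; q^t)_n as a polynomial in q. -/
def qpoch (t n : ℕ) : Polynomial ℚ :=
  ∏ i ∈ Finset.range n, (1 - Polynomial.X ^ (t * (i + 1)))

/-- The Gaussian binomial coefficient [A choose B] in base q^t: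
(q^t;q^t)_A / ((q^t;q^t)_B (q^t;q^t)_{A-B}) when 0 ≤ B ≤ A, and 0 otherwise. -/
def gauss (t : ℕ) (A B : ℤ) : Polynomial ℚ :=
  if 0 ≤ B ∧ B ≤ A then
    qpoch t A.toNat / (qpoch t B.toNat * qpoch t (A - B).toNat)
  else 0
/-- Formal power series in three variables x/μ = X 0, z/ν = X 1, q = X 2. -/
abbrev S3 := MvPowerSeries (Fin 3) ℚ

/-- Product topology with discrete coefficients, so that infinite sums and
products of power series are meaningful. -/
instance : TopologicalSpace S3 :=
  @Pi.topologicalSpace ((Fin 3) →₀ ℕ) (fun _ => ℚ) (fun _ => ⊥)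

/-- Interpret a polynomial in q as a power series in the variable X 2. -/
def pq (p : Polynomial ℚ) : S3 := Polynomial.aeval (MvPowerSeries.X 2 : S3) p
/-- The basis set B_{a,b,k}(m): partitions (non-increasing lists) with m parts,
each part ≡ a or b (mod k), last part a or b, and consecutive parts differing
by less than k. -/
def IsBabk (a b k m : ℕ) (l : List ℕ) : Prop :=
  l.length = m ∧ l.Pairwise (· ≥ ·) ∧
    (∀ x ∈ l, x % k = a % k ∨ x % k = b % k) ∧
    (l.getLast? = some a ∨ l.getLast? = some b) ∧
    l.Chain' (fun x y => x < y + k)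

open MvPowerSeries in
/-- g_{a,b,k}(m, lp): the generating function ∑ μ^{ℓ_a(λ)} ν^{ℓ_b(λ)} q^{|λ|}
(μ = X 0, ν = X 1, q = X 2) over partitions λ in B_{a,b,k}(m) with largest
part lp. -/
def gab (a b k m lp : ℕ) : S3 :=
  ∑' l : {l : List ℕ // IsBabk a b k m l ∧ l.head? = some lp},
    (X 0 : S3) ^ (l.1.filter (fun x => x % k = a % k)).length *
      (X 1 : S3) ^ (l.1.filter (fun x => x % k = b % k)).length *
        (X 2 : S3) ^ l.1.sum

open MvPowerSeries in
/-- for m ≥ 1 and h ≥ 0,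
g_{a,b,k}(m+1, kh+b) = ν q^{kh+b} (g_{a,b,k}(m, kh+a) + g_{a,b,k}(m, kh+b)). -/
lemma mem_le_head {l : List ℕ} {lp : ℕ} (hs : l.Pairwise (· ≥ ·)) (hh : l.head? = some lp)
    {x : ℕ} (hx : x ∈ l) : x ≤ lp := by
  cases l with
  | nil => simp at hx
  | cons y t =>
    simp only [List.head?_cons, Option.some.injEq] at hh
    subst hh
    rcases List.mem_cons.mp hx with rfl | hx
    · exact le_rfl
    · exact (List.pairwise_cons.mp hs).1 x hx

lemma finite_T (a b k m lp : ℕ) :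
    Finite {l : List ℕ // IsBabk a b k m l ∧ l.head? = some lp} := by
  let f : {l : List ℕ // IsBabk a b k m l ∧ l.head? = some lp} → (Fin m → Fin (lp + 1)) :=
    fun l i => ⟨l.1.getD i 0, by
      have hlen : l.1.length = m := l.2.1.1
      have hmem : l.1.getD i 0 ∈ l.1 := by
        rw [List.getD_eq_getElem l.1 0 (by omega)]
        exact List.getElem_mem _
      exact Nat.lt_succ_of_le (mem_le_head l.2.1.2.1 l.2.2 hmem)⟩
  have hf : Function.Injective f := by
    intro l₁ l₂ hl
    ext1
    apply List.ext_getElem (by rw [l₁.2.1.1, l₂.2.1.1])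
    intro i h1 h2
    have hi : i < m := by rw [← l₁.2.1.1]; exact h1
    have := congrFun hl ⟨i, hi⟩
    simp only [f, Fin.mk.injEq] at this
    rwa [List.getD_eq_getElem l₁.1 0 h1, List.getD_eq_getElem l₂.1 0 h2] at this
  exact Finite.of_injective f hf

-- x ≡ y, x ≤ y, y < x + k → x = y
lemma cong_eq {k x y : ℕ} (h1 : x % k = y % k) (h2 : x ≤ y) (h3 : y < x + k) : x = y := by
  have hd : k ∣ y - x := (Nat.modEq_iff_dvd' h2).mp h1
  have := Nat.eq_zero_of_dvd_of_lt hd (by omega)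
  omega

lemma cong_eq' {k x y : ℕ} (h1 : x % k = y % k) (h2 : y < x + k) (h3 : x < y + k) : x = y := by
  rcases le_total x y with hle | hle
  · exact cong_eq h1 hle h2
  · exact (cong_eq h1.symm hle h3).symm

lemma tail_mem {a b k m h : ℕ} (ha : 1 ≤ a) (hab : a < b) (hbk : b ≤ k) (hm : 1 ≤ m)
    {l : List ℕ} (hl : IsBabk a b k (m + 1) l) (hh : l.head? = some (k * h + b)) :
    IsBabk a b k m l.tail ∧
      (l.tail.head? = some (k * h + a) ∨ l.tail.head? = some (k * h + b)) := by
  obtain ⟨hlen, hsort, hmod, hlast, hchain⟩ := hl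
  match l, hlen with
  | [], hlen => simp at hlen
  | [x], hlen => simp at hlen; omega
  | x :: y :: t, hlen =>
    simp only [List.head?_cons, Option.some.injEq] at hh
    subst hh
    have hyx : y ≤ k * h + b := (List.pairwise_cons.mp hsort).1 y (by simp)
    have hcy : k * h + b < y + k := (List.isChain_cons_cons.mp hchain).1
    have hy : y = k * h + a ∨ y = k * h + b := by
      rcases hmod y (by simp) with hy | hy
      · left
        have haa : a % k = a := Nat.mod_eq_of_lt (by omega)
        have hmm : (k * h + a) % k = y % k := by rw [Nat.mul_add_mod, hy, haa]
        exact (cong_eq' hmm (by omega) (by omega)).symm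
      · right
        have hmm : y % k = (k * h + b) % k := by rw [Nat.mul_add_mod, hy]
        exact cong_eq hmm hyx hcy
    refine ⟨⟨by simpa using hlen, (List.pairwise_cons.mp hsort).2,
      fun x hx => hmod x (List.mem_cons_of_mem _ hx), ?_, (List.isChain_cons_cons.mp hchain).2⟩, ?_⟩
    · rwa [List.getLast?_cons_cons] at hlast
    · rcases hy with rfl | rfl
      · left; rfl
      · right; rfl

lemma cons_mem {a b k m h : ℕ} (ha : 1 ≤ a) (hab : a < b) (hbk : b ≤ k)
    {t : List ℕ} (ht : IsBabk a b k m t)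
    (hh : t.head? = some (k * h + a) ∨ t.head? = some (k * h + b)) :
    IsBabk a b k (m + 1) ((k * h + b) :: t) ∧
      ((k * h + b) :: t).head? = some (k * h + b) := by
  obtain ⟨hlen, hsort, hmod, hlast, hchain⟩ := ht
  match t with
  | [] => simp at hh
  | y :: t' =>
    have hhy : y = k * h + a ∨ y = k * h + b := by
      rcases hh with hh | hh <;> simp only [List.head?_cons, Option.some.injEq] at hh <;>
        [exact Or.inl hh; exact Or.inr hh]
    have hyb : y ≤ k * h + b := by rcases hhy with rfl | rfl <;> omega
    refine ⟨⟨by simpa using hlen, ?_, ?_, ?_, ?_⟩, rfl⟩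
    · rw [List.pairwise_cons]
      refine ⟨fun x hx => ?_, hsort⟩
      have := mem_le_head hsort (l := y :: t') rfl hx
      omega
    · intro x hx
      rcases List.mem_cons.mp hx with rfl | hx
      · right; rw [Nat.mul_add_mod]
      · exact hmod x hx
    · rwa [List.getLast?_cons_cons]
    · apply List.isChain_cons_cons.mpr
      exact ⟨by rcases hhy with rfl | rfl <;> omega, hchain⟩

open MvPowerSeries in
def Wfun (a b k : ℕ) (l : List ℕ) : S3 :=
  (X 0 : S3) ^ (l.filter (fun x => x % k = a % k)).length *
    (X 1 : S3) ^ (l.filter (fun x => x % k = b % k)).length *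
      (X 2 : S3) ^ l.sum

lemma gab_eq (a b k m lp : ℕ) :
    gab a b k m lp =
      ∑' l : {l : List ℕ // IsBabk a b k m l ∧ l.head? = some lp}, Wfun a b k l.1 := rfl

open MvPowerSeries in
lemma Wfun_cons' {a b k : ℕ} (ha : 1 ≤ a) (hab : a < b) (hbk : b ≤ k) (h : ℕ) (t : List ℕ) :
    Wfun a b k ((k * h + b) :: t) =
      (X 1 : S3) * (X 2 : S3) ^ (k * h + b) * Wfun a b k t := by
  have hfa : ¬ ((k * h + b) % k = a % k) := by
    rw [Nat.mul_add_mod, Nat.mod_eq_of_lt (show a < k by omega)]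
    rcases Nat.lt_or_ge b k with hbk' | hbk'
    · rw [Nat.mod_eq_of_lt hbk']; omega
    · have hbb : b = k := by omega
      subst hbb; rw [Nat.mod_self]; omega
  have hfb : (k * h + b) % k = b % k := Nat.mul_add_mod k h b
  have hfa2 : ¬ (b % k = a % k) := by rwa [hfb] at hfa
  unfold Wfun
  simp only [List.filter_cons, hfa, hfb, hfa2, decide_eq_true_eq, if_true, if_false,
    List.length_cons, List.sum_cons]

  ring

open MvPowerSeries in
theorem stmt7 (a b k m h : ℕ) (ha : 1 ≤ a) (hab : a < b) (hbk : b ≤ k)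
    (hm : 1 ≤ m) :
    gab a b k (m + 1) (k * h + b) =
      (X 1 : S3) * (X 2 : S3) ^ (k * h + b) *
        (gab a b k m (k * h + a) + gab a b k m (k * h + b)) := by
  have hk : 1 ≤ k := by omega
  haveI f1 : Finite {l : List ℕ // IsBabk a b k (m + 1) l ∧ l.head? = some (k * h + b)} :=
    finite_T _ _ _ _ _
  haveI f2 : Finite {l : List ℕ // IsBabk a b k m l ∧ l.head? = some (k * h + a)} :=
    finite_T _ _ _ _ _
  haveI f3 : Finite {l : List ℕ // IsBabk a b k m l ∧ l.head? = some (k * h + b)} :=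
    finite_T _ _ _ _ _
  haveI := Fintype.ofFinite {l : List ℕ // IsBabk a b k (m + 1) l ∧ l.head? = some (k * h + b)}
  haveI := Fintype.ofFinite {l : List ℕ // IsBabk a b k m l ∧ l.head? = some (k * h + a)}
  haveI := Fintype.ofFinite {l : List ℕ // IsBabk a b k m l ∧ l.head? = some (k * h + b)}
  rw [gab_eq, gab_eq, gab_eq, tsum_fintype, tsum_fintype, tsum_fintype]
  let φ : {l : List ℕ // IsBabk a b k m l ∧ l.head? = some (k * h + a)} ⊕
      {l : List ℕ // IsBabk a b k m l ∧ l.head? = some (k * h + b)} →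
      {l : List ℕ // IsBabk a b k (m + 1) l ∧ l.head? = some (k * h + b)} :=
    Sum.elim (fun t => ⟨(k * h + b) :: t.1, cons_mem ha hab hbk t.2.1 (Or.inl t.2.2)⟩)
      (fun t => ⟨(k * h + b) :: t.1, cons_mem ha hab hbk t.2.1 (Or.inr t.2.2)⟩)
  have hbij : Function.Bijective φ := by
    constructor
    · rintro (t1 | t1) (t2 | t2) hφ <;>
        simp only [φ, Sum.elim_inl, Sum.elim_inr, Subtype.mk.injEq, List.cons.injEq,
          true_and] at hφ
      · exact congrArg Sum.inl (Subtype.ext hφ)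
      · exfalso
        have h1 := t1.2.2; have h2 := t2.2.2
        rw [hφ, h2] at h1
        simp only [Option.some.injEq] at h1
        omega
      · exfalso
        have h1 := t1.2.2; have h2 := t2.2.2
        rw [hφ, h2] at h1
        simp only [Option.some.injEq] at h1
        omega
      · exact congrArg Sum.inr (Subtype.ext hφ)
    · rintro ⟨l1, hp⟩
      cases l1 with
      | nil => exact absurd hp.2 (by simp)
      | cons x t =>
        have hx : x = k * h + b := by simpa using hp.2
        subst hx
        obtain ⟨hT, hhd⟩ := tail_mem ha hab hbk hm hp.1 hp.2
        rcases hhd with hhd | hhd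
        · exact ⟨Sum.inl ⟨t, hT, hhd⟩, rfl⟩
        · exact ⟨Sum.inr ⟨t, hT, hhd⟩, rfl⟩
  let e := Equiv.ofBijective φ hbij
  rw [← Equiv.sum_comp e (fun l => Wfun a b k l.1)]
  have he : ∀ x, e x = φ x := fun x => rfl
  simp only [he, φ, Fintype.sum_sum_type, Sum.elim_inl, Sum.elim_inr]
  simp only [Wfun_cons' ha hab hbk]
  rw [← Finset.mul_sum, ← Finset.mul_sum, mul_add]
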